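/- Let L be a field of prime characteristic p, K ⊆ L a subfield, and e ≥ 1. Suppose φ : L → L is a p^{−e}-linear map such that φ(K) ⊆ K. Let M be an intermediate field K ⊆ M ⊆ L such that M is algebraic and separable over K. Then φ(M) ⊆ M; in other words, φ restricts to a p^{−e}-linear map φ_M : M → M that extends φ|_K and is extended by φ. -/

import Mathlib

/-- Let `L` be a field of prime characteristic `p`, `K ⊆ L` a
subfield, and `e ≥ 1`.  Suppose `φ : L → L` is a `p^{-e}`-linear map with
`φ(K) ⊆ K`.  Let `M` be an intermediate field `K ⊆ M ⊆ L` which is algebraic and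
separable over `K`.  Then `φ(M) ⊆ M`, i.e. `φ` restricts to a `p^{-e}`-linear map on
`M` extending `φ|_K` and extended by `φ`. -/
theorem stmt_2 {p : ℕ} (hp : p.Prime) {e : ℕ} (he : 1 ≤ e)
    {K L : Type*} [Field K] [Field L] [Algebra K L] [CharP L p]
    (φ : L → L)
    (hadd : ∀ a b : L, φ (a + b) = φ a + φ b)
    (hsemi : ∀ a b : L, φ (a ^ p ^ e * b) = a * φ b)
    (hK : ∀ k : K, φ (algebraMap K L k) ∈ Set.range (algebraMap K L))
    (M : IntermediateField K L)
    (halg : ∀ x : L, x ∈ M → IsAlgebraic K x)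
    (hsep : ∀ x : L, x ∈ M → IsSeparable K x) :
    ∀ x : L, x ∈ M → φ x ∈ M := by
  haveI : CharP K p := (algebraMap K L).charP (algebraMap K L).injective p
  haveI : ExpChar K p := ExpChar.prime hp
  intro x hx
  -- x ∈ K⟮x⟯ = K⟮x ^ p ^ e⟯
  haveI : Algebra.IsSeparable K (IntermediateField.adjoin K {x} : IntermediateField K L) :=
    (IntermediateField.isSeparable_adjoin_simple_iff_isSeparable K L).2 (hsep x hx)
  have hadj : IntermediateField.adjoin K ({x} : Set L)
      = IntermediateField.adjoin K {x ^ p ^ e} := by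
    have := IntermediateField.adjoin_eq_adjoin_pow_expChar_pow_of_isSeparable K L
      ({x} : Set L) p e
    rwa [Set.image_singleton] at this
  have hxmem : x ∈ IntermediateField.adjoin K ({x ^ p ^ e} : Set L) := by
    rw [← hadj]
    exact IntermediateField.mem_adjoin_simple_self K x
  have hint : IsIntegral K (x ^ p ^ e) :=
    ((halg x hx).isIntegral).pow _
  have hxmem' : x ∈ Algebra.adjoin K ({x ^ p ^ e} : Set L) := by
    rw [← IntermediateField.adjoin_simple_toSubalgebra_of_isAlgebraic hint.isAlgebraic]
    exact hxmem
  rw [Algebra.adjoin_singleton_eq_range_aeval] at hxmem'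
  obtain ⟨f, hf⟩ := hxmem'
  -- φ as an additive monoid hom
  let ψ : L →+ L := AddMonoidHom.mk' φ hadd
  have hψ : φ x = ψ x := rfl
  rw [hψ, ← hf]
  show ψ (Polynomial.aeval (x ^ p ^ e) f) ∈ M
  rw [Polynomial.aeval_eq_sum_range, map_sum]
  apply sum_mem
  intro i _
  have : ψ (f.coeff i • (x ^ p ^ e) ^ i)
      = x ^ i * φ (algebraMap K L (f.coeff i)) := by
    show φ _ = _
    rw [Algebra.smul_def, ← pow_right_comm, mul_comm, hsemi]
  rw [this]
  obtain ⟨k, hk⟩ := hK (f.coeff i)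
  rw [← hk]
  exact mul_mem (pow_mem hx i) (IntermediateField.algebraMap_mem M k)
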